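/- Define rational functions G⁺_{ij}(x;t) for 1 ≤ i ≤ j ≤ n by G⁺_{jj} = 1 and the recurrence (1 - x_i x_j^{-1}) G⁺_{ij} = (1 - t^{-1}) Σ_{i<k≤j} x_k x_j^{-1} G⁺_{kj} for i < j. Then G⁺_{ij}(x;t) = t^{i-j} (1-t) x_j Δ(x_i,…,x_{j-1},t x_j) / ((x_i - t x_j) Δ(x_i,…,x_j)), where Δ(y_1,…,y_m) = Π_{1≤a<b≤m} (y_b - y_a). -/

import Mathlib

open Finset

lemma pair_prod_insert {α M : Type*} [LinearOrder α] [CommMonoid M] [DecidableEq α]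
    (f : α × α → M) (a : α) (s : Finset α) (ha : ∀ b ∈ s, a < b) :
    ∏ p ∈ ((insert a s) ×ˢ (insert a s)).filter (fun p => p.1 < p.2), f p =
      (∏ b ∈ s, f (a, b)) *
        ∏ p ∈ (s ×ˢ s).filter (fun p => p.1 < p.2), f p := by
  have hset : ((insert a s) ×ˢ (insert a s)).filter (fun p => p.1 < p.2) =
      ({a} ×ˢ s) ∪ (s ×ˢ s).filter (fun p => p.1 < p.2) := by
    ext ⟨p1, p2⟩
    simp only [Finset.mem_filter, Finset.mem_product, Finset.mem_insert,
      Finset.mem_union, Finset.mem_singleton]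
    constructor
    · rintro ⟨⟨h1 | h1, h2 | h2⟩, hlt⟩
      · exact absurd hlt (by rw [h1, h2]; exact lt_irrefl a)
      · exact Or.inl ⟨h1, h2⟩
      · exact absurd ((h2 ▸ hlt).trans (ha _ h1)) (lt_irrefl _)
      · exact Or.inr ⟨⟨h1, h2⟩, hlt⟩
    · rintro (⟨h1, h2⟩ | ⟨⟨h1, h2⟩, hlt⟩)
      · exact ⟨⟨Or.inl h1, Or.inr h2⟩, h1 ▸ ha _ h2⟩
      · exact ⟨⟨Or.inr h1, Or.inr h2⟩, hlt⟩
  have hdisj : Disjoint ({a} ×ˢ s) ((s ×ˢ s).filter (fun p => p.1 < p.2)) := by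
    rw [Finset.disjoint_left]
    rintro ⟨p1, p2⟩ hp hq
    simp only [Finset.mem_product, Finset.mem_singleton] at hp
    simp only [Finset.mem_filter, Finset.mem_product] at hq
    exact absurd (ha a (hp.1 ▸ hq.1.1)) (lt_irrefl a)
  rw [hset, Finset.prod_union hdisj, Finset.singleton_product, Finset.prod_map]
  rfl


/-- the solution of the recurrence
`(1 - x_i x_j⁻¹) G⁺_{ij} = (1 - t⁻¹) Σ_{i<k≤j} x_k x_j⁻¹ G⁺_{kj}`, `G⁺_{jj} = 1`,
is `G⁺_{ij} = t^{i-j} (1-t) x_j Δ(x_i,…,x_{j-1},t x_j) / ((x_i - t x_j) Δ(x_i,…,x_j))`. -/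
theorem stmt_6 {K : Type*} [Field K] (n : ℕ) (t : K) (x : Fin n → K)
    (ht : t ≠ 0) (hx0 : ∀ i, x i ≠ 0) (hinj : Function.Injective x)
    (htx : ∀ k i, t * x k ≠ x i)
    (G : Fin n → Fin n → K)
    (hdiag : ∀ j, G j j = 1)
    (hrec : ∀ i j : Fin n, i < j →
      (1 - x i * (x j)⁻¹) * G i j =
        (1 - t⁻¹) * ∑ k ∈ Finset.Ioc i j, x k * (x j)⁻¹ * G k j) :
    ∀ i j : Fin n, i ≤ j →
      G i j = t ^ ((i : ℤ) - (j : ℤ)) *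
        ((1 - t) * x j *
          ((∏ p ∈ (Finset.Ico i j ×ˢ Finset.Ico i j).filter fun p => p.1 < p.2,
              (x p.2 - x p.1)) * ∏ m ∈ Finset.Ico i j, (t * x j - x m))) /
        ((x i - t * x j) *
          ∏ p ∈ (Finset.Icc i j ×ˢ Finset.Icc i j).filter fun p => p.1 < p.2,
            (x p.2 - x p.1)) := by
  -- modified recurrence
  have hrec' : ∀ i j : Fin n, i < j →
      (x j - x i) * G i j = (1 - t⁻¹) * ∑ k ∈ Finset.Ioc i j, x k * G k j := by
    intro i j h
    have h0 := hrec i j h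
    have hxj := hx0 j
    calc (x j - x i) * G i j = ((1 - x i * (x j)⁻¹) * G i j) * x j := by
          field_simp
      _ = ((1 - t⁻¹) * ∑ k ∈ Finset.Ioc i j, x k * (x j)⁻¹ * G k j) * x j := by rw [h0]
      _ = (1 - t⁻¹) * ∑ k ∈ Finset.Ioc i j, x k * G k j := by
          rw [mul_assoc, Finset.sum_mul]
          congr 1
          apply Finset.sum_congr rfl
          intro k _
          field_simp
  -- two-term recurrence
  have step : ∀ j i i' : Fin n, i < j → (i' : ℕ) = (i : ℕ) + 1 →
      (x j - x i) * G i j = (x j - x i' * t⁻¹) * G i' j := by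
    intro j i i' h hi'
    have hlt : (i : ℕ) < (j : ℕ) := h
    have hi'le : i' ≤ j := by rw [Fin.le_def]; omega
    rcases eq_or_lt_of_le hi'le with he | hlt2
    · have hIoc : Finset.Ioc i j = {j} := by
        ext a
        have : (i' : ℕ) = (j : ℕ) := by rw [he]
        simp only [Finset.mem_Ioc, Finset.mem_singleton, Fin.lt_def, Fin.le_def, Fin.ext_iff]
        omega
      rw [hrec' i j h, hIoc, Finset.sum_singleton, hdiag, he, hdiag]
      ring
    · have hIoc : Finset.Ioc i j = insert i' (Finset.Ioc i' j) := by
        ext a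
        simp only [Finset.mem_Ioc, Finset.mem_insert, Fin.lt_def, Fin.le_def, Fin.ext_iff]
        omega
      have hnotmem : i' ∉ Finset.Ioc i' j := by simp
      have h1 := hrec' i j h
      have h2 := hrec' i' j hlt2
      rw [hIoc, Finset.sum_insert hnotmem] at h1
      rw [h1]
      linear_combination -h2
  intro i j hij
  have main : ∀ d : ℕ, ∀ i : Fin n, i ≤ j → (j : ℕ) - (i : ℕ) = d →
      G i j = t ^ ((i : ℤ) - (j : ℤ)) *
        ((1 - t) * x j *
          ((∏ p ∈ (Finset.Ico i j ×ˢ Finset.Ico i j).filter fun p => p.1 < p.2,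
              (x p.2 - x p.1)) * ∏ m ∈ Finset.Ico i j, (t * x j - x m))) /
        ((x i - t * x j) *
          ∏ p ∈ (Finset.Icc i j ×ˢ Finset.Icc i j).filter fun p => p.1 < p.2,
            (x p.2 - x p.1)) := by
    intro d
    induction d with
    | zero =>
      intro i hle hd
      have : i = j := by
        have := Fin.le_def.mp hle
        exact Fin.ext (by omega)
      subst this
      have h1 : Finset.Ico i i = (∅ : Finset (Fin n)) := Finset.Ico_self i
      have h2 : ((Finset.Icc i i ×ˢ Finset.Icc i i).filter fun p => p.1 < p.2)
          = (∅ : Finset (Fin n × Fin n)) := by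
        rw [Finset.Icc_self]
        ext ⟨a, b⟩
        simp only [Finset.mem_filter, Finset.mem_product, Finset.mem_singleton,
          Finset.notMem_empty, iff_false]
        rintro ⟨⟨rfl, rfl⟩, hab⟩
        exact lt_irrefl _ hab
      rw [hdiag, h1, h2]
      simp only [Finset.prod_empty, sub_self, zpow_zero, Finset.empty_product,
        Finset.filter_empty, one_mul, mul_one]
      have hne : x i - t * x i ≠ 0 := sub_ne_zero.mpr (Ne.symm (htx i i))
      rw [eq_div_iff hne]
      ring
    | succ d ih =>
      intro i hle hd
      have hvlt : (i : ℕ) < (j : ℕ) := by omega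
      have hijlt : i < j := hvlt
      have hi'bd : (i : ℕ) + 1 < n := by omega
      set i' : Fin n := ⟨(i : ℕ) + 1, hi'bd⟩ with hi'def
      have hi'v : (i' : ℕ) = (i : ℕ) + 1 := rfl
      have hi'le : i' ≤ j := by rw [Fin.le_def]; simp [hi'v]; omega
      have hG' := ih i' hi'le (by simp [hi'v]; omega)
      have hstep := step j i i' hijlt hi'v
      -- interval splittings
      have hIco : Finset.Ico i j = insert i (Finset.Ico i' j) := by
        ext a
        simp only [Finset.mem_Ico, Finset.mem_insert, Fin.lt_def, Fin.le_def, Fin.ext_iff, hi'v]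
        omega
      have hIcc : Finset.Icc i j = insert i (Finset.Icc i' j) := by
        ext a
        simp only [Finset.mem_Icc, Finset.mem_insert, Fin.lt_def, Fin.le_def, Fin.ext_iff, hi'v]
        omega
      have hIcc' : Finset.Icc i' j = insert j (Finset.Ico i' j) := by
        ext a
        simp only [Finset.mem_Icc, Finset.mem_Ico, Finset.mem_insert, Fin.lt_def, Fin.le_def,
          Fin.ext_iff, hi'v]
        omega
      have hja : j ∉ Finset.Ico i' j := by simp
      have hia : i ∉ Finset.Ico i' j := by
        simp only [Finset.mem_Ico, Fin.le_def, Fin.lt_def, hi'v, not_and]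
        omega
      have haIco : ∀ b ∈ Finset.Ico i' j, i < b := by
        intro b hb
        simp only [Finset.mem_Ico, Fin.le_def, hi'v] at hb
        exact Fin.lt_def.mpr (by omega)
      have haIcc : ∀ b ∈ Finset.Icc i' j, i < b := by
        intro b hb
        simp only [Finset.mem_Icc, Fin.le_def, hi'v] at hb
        exact Fin.lt_def.mpr (by omega)
      set PA := ∏ p ∈ (Finset.Ico i' j ×ˢ Finset.Ico i' j).filter fun p => p.1 < p.2,
        (x p.2 - x p.1) with hPA
      set PB := ∏ m ∈ Finset.Ico i' j, (t * x j - x m) with hPB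
      set PC := ∏ p ∈ (Finset.Icc i' j ×ˢ Finset.Icc i' j).filter fun p => p.1 < p.2,
        (x p.2 - x p.1) with hPC
      set PD := ∏ b ∈ Finset.Ico i' j, (x b - x i) with hPD
      have hA : (∏ p ∈ (Finset.Ico i j ×ˢ Finset.Ico i j).filter fun p => p.1 < p.2,
          (x p.2 - x p.1)) = PD * PA := by
        rw [hIco, pair_prod_insert (fun p => x p.2 - x p.1) i _ haIco]
      have hB : (∏ m ∈ Finset.Ico i j, (t * x j - x m)) = (t * x j - x i) * PB := by
        rw [hIco, Finset.prod_insert hia]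
      have hC : (∏ p ∈ (Finset.Icc i j ×ˢ Finset.Icc i j).filter fun p => p.1 < p.2,
          (x p.2 - x p.1)) = ((x j - x i) * PD) * PC := by
        rw [hIcc, pair_prod_insert (fun p => x p.2 - x p.1) i _ haIcc]
        congr 1
        rw [hIcc', Finset.prod_insert hja]
      -- nonzero facts
      have hxji : x j - x i ≠ 0 := sub_ne_zero.mpr (fun hh => (Fin.lt_def.mp hijlt).ne (congrArg Fin.val (hinj hh)).symm)
      have hPCne : PC ≠ 0 := by
        rw [hPC]
        apply Finset.prod_ne_zero_iff.mpr
        intro p hp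
        have hlt := (Finset.mem_filter.mp hp).2
        exact sub_ne_zero.mpr (fun hh => lt_irrefl p.1 ((hinj hh) ▸ hlt))
      have hPDne : PD ≠ 0 := by
        rw [hPD]
        apply Finset.prod_ne_zero_iff.mpr
        intro b hb
        have := haIco b hb
        exact sub_ne_zero.mpr (fun hh => lt_irrefl i ((hinj hh) ▸ this))
      have hden1 : x i - t * x j ≠ 0 := sub_ne_zero.mpr (Ne.symm (htx j i))
      have hden2 : x i' - t * x j ≠ 0 := sub_ne_zero.mpr (Ne.symm (htx j i'))
      -- zpow manipulation
      have hzexp : ((i' : ℤ) - (j : ℤ)) = 1 + ((i : ℤ) - (j : ℤ)) := by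
        have : (i' : ℤ) = (i : ℤ) + 1 := by exact_mod_cast hi'v
        omega
      set u := t ^ ((i' : ℤ) - (j : ℤ)) with hu
      set v := t ^ ((i : ℤ) - (j : ℤ)) with hv
      have huv : t * v = u := by
        rw [hu, hv, hzexp, zpow_add₀ ht, zpow_one]
      -- multiplied versions
      have hstep2 : (t * (x j - x i)) * G i j = (t * x j - x i') * G i' j := by
        have h3 : t * ((x j - x i) * G i j) = t * ((x j - x i' * t⁻¹) * G i' j) := by
          rw [hstep]
        calc (t * (x j - x i)) * G i j = t * ((x j - x i) * G i j) := by ring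
          _ = t * ((x j - x i' * t⁻¹) * G i' j) := h3
          _ = (t * x j - x i') * G i' j := by
              have h4 : t * (x i' * t⁻¹) = x i' := by field_simp
              linear_combination (-(G i' j)) * h4
      have hG'' : G i' j * ((x i' - t * x j) * PC) =
          u * ((1 - t) * x j * (PA * PB)) := by
        rw [hG', div_mul_cancel₀ _ (mul_ne_zero hden2 hPCne)]
      rw [hA, hB, hC]
      rw [eq_div_iff (mul_ne_zero hden1 (mul_ne_zero (mul_ne_zero hxji hPDne) hPCne))]
      apply mul_left_cancel₀ (mul_ne_zero ht (mul_ne_zero hden2 hPCne))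
      linear_combination
        (((x i' - t * x j) * PC) * ((x i - t * x j) * PD * PC)) * hstep2 +
        ((((x i - t * x j) * PD * PC) * (t * x j - x i'))) * hG'' +
        (-(((x i - t * x j) * PD * PC) * (t * x j - x i') *
          ((1 - t) * x j * (PA * PB)))) * huv
  exact main ((j : ℕ) - (i : ℕ)) i hij rfl
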